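/- Let W be a finite S-set such that |W^Q| = |W^{Q'}| whenever Q, Q' ≤ S are G-conjugate subgroups (i.e. W is F_S(G)-stable). Then there exist a finite list P₁, …, P_k of pairwise non-G-conjugate subgroups of S and p-integral rational numbers c₁, …, c_k such that for every subgroup Q ≤ S: |W^Q| = Σ_{i=1}^{k} c_i · f_{P_i}(Q), where f_P(Q) = (|N_G(Q,P)| · |S|) / (|P| · |N_G(Q,S)|). (This is the spanning half of the paper's Proposition that the elements β_P form a ℤ_(p)-basis of the p-localized Burnside ring A(F)_(p) for F = F_S(G), expressed through the homomorphism of marks: every F-stable set is a ℤ_(p)-linear combination of the β_P, whose marks are Φ_Q(β_P) = f_P(Q).) -/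

import Mathlib

/-- Two subgroups of `G` are `G`-conjugate if conjugation by some element of `G`
carries one onto the other. -/
def GConj {G : Type*} [Group G] (P Q : Subgroup G) : Prop :=
  ∃ g : G, Subgroup.map (MulAut.conj g).toMonoidHom P = Q

/-- The transporter `N_G(A,B) = {g ∈ G : gAg⁻¹ ≤ B}`. -/
def transporter {G : Type*} [Group G] (A B : Subgroup G) : Set G :=
  {g : G | ∀ a ∈ A, g * a * g⁻¹ ∈ B}

/-- A rational number is `p`-integral if it can be written with a denominator
prime to `p`. -/
def IsPIntegral (p : ℕ) (q : ℚ) : Prop :=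
  ∃ a b : ℤ, ¬ (p : ℤ) ∣ b ∧ q * b = a

/-- The mark `f_P(Q) = |N_G(Q,P)|·|S| / (|P|·|N_G(Q,S)|)` of the basis element
`β_P` at the subgroup `Q`. -/
noncomputable def fpMark {G : Type*} [Group G] (S P Q : Subgroup G) : ℚ :=
  (Nat.card ↥(transporter Q P) * Nat.card ↥S : ℚ) /
    (Nat.card ↥P * Nat.card ↥(transporter Q S))

/-- The number of fixed points `|X^Q|` of an `S`-set `X` under a subgroup
`Q` of the ambient group, where the `S`-action is given explicitly by `m`. -/
noncomputable def fixCard {H : Type*} [Group H] (S Q : Subgroup H) (X : Type)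
    (m : MulAction ↥S X) : ℕ :=
  letI := m
  Nat.card ↥{x : X | ∀ s : ↥S, (s : H) ∈ Q → s • x = x}

open Subgroup Pointwise

attribute [local instance] Classical.propDecidable
set_option maxHeartbeats 2000000
set_option linter.unusedSectionVars false

section AuxA

variable {G : Type*} [Group G]

lemma map_conj_comp (g h : G) (P : Subgroup G) :
    (P.map (MulAut.conj h).toMonoidHom).map (MulAut.conj g).toMonoidHom
      = P.map (MulAut.conj (g * h)).toMonoidHom := by
  rw [Subgroup.map_map]
  congr 1
  ext x
  simp [mul_assoc]

lemma mem_map_conj {g x : G} {P : Subgroup G} :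
    x ∈ P.map (MulAut.conj g).toMonoidHom ↔ g⁻¹ * x * g ∈ P := by
  simp only [Subgroup.mem_map, MulEquiv.coe_toMonoidHom, MulAut.conj_apply]
  constructor
  · rintro ⟨y, hy, rfl⟩; group; simpa
  · intro h; exact ⟨g⁻¹ * x * g, h, by group⟩

lemma GConj.refl' (Q : Subgroup G) : GConj Q Q := by
  refine ⟨1, ?_⟩
  ext x
  simp [mem_map_conj]

lemma GConj.symm' {P Q : Subgroup G} (h : GConj P Q) : GConj Q P := by
  obtain ⟨g, rfl⟩ := h
  refine ⟨g⁻¹, ?_⟩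
  rw [map_conj_comp]
  ext x
  simp [mem_map_conj]

lemma GConj.trans' {P Q R : Subgroup G} (h1 : GConj P Q) (h2 : GConj Q R) : GConj P R := by
  obtain ⟨g, rfl⟩ := h1
  obtain ⟨g', rfl⟩ := h2
  exact ⟨g' * g, (map_conj_comp g' g P).symm⟩

lemma card_map_conj' (g : G) (Q : Subgroup G) :
    Nat.card (Q.map (MulAut.conj g).toMonoidHom) = Nat.card Q :=
  (Nat.card_congr (Subgroup.equivMapOfInjective Q _ (MulAut.conj g).injective).toEquiv).symm

lemma GConj.card_eq {P Q : Subgroup G} (h : GConj P Q) : Nat.card P = Nat.card Q := by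
  obtain ⟨g, rfl⟩ := h
  exact (card_map_conj' g P).symm

lemma card_lt_of_lt' [Finite G] {H K : Subgroup G} (h : H < K) :
    Nat.card H < Nat.card K := by
  by_contra hc
  push_neg at hc
  exact h.ne (Subgroup.eq_of_le_of_card_ge h.le hc)

/-- fixed points of `Q` acting on `G ⧸ P` -/
def gfix (P Q : Subgroup G) : Set (G ⧸ P) := {x | ∀ g ∈ Q, g • x = x}

noncomputable def gfixCard (P Q : Subgroup G) : ℕ := Nat.card (gfix P Q)

lemma mem_gfix_mk {P Q : Subgroup G} (g : G) :
    (g : G ⧸ P) ∈ gfix P Q ↔ ∀ q ∈ Q, g⁻¹ * q * g ∈ P := by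
  constructor
  · intro h q hq
    have := h q⁻¹ (inv_mem hq)
    rw [MulAction.Quotient.smul_mk, QuotientGroup.eq] at this
    simpa [mul_assoc] using this
  · intro h q hq
    rw [MulAction.Quotient.smul_mk, QuotientGroup.eq]
    have := h q⁻¹ (inv_mem hq)
    simpa [mul_assoc] using this

lemma card_transporter (P Q : Subgroup G) :
    Nat.card (transporter Q P) = gfixCard P Q * Nat.card P := by
  have e1 : ↥(transporter Q P) ≃ ↥(QuotientGroup.mk ⁻¹' (gfix P Q)) := by
    refine ⟨fun t => ⟨(t : G)⁻¹, ?_⟩, fun u => ⟨(u : G)⁻¹, ?_⟩, ?_, ?_⟩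
    · rcases t with ⟨t, ht⟩
      simp only [Set.mem_preimage, mem_gfix_mk]
      intro q hq
      simpa [mul_assoc] using ht q hq
    · rcases u with ⟨u, hu⟩
      simp only [Set.mem_preimage, mem_gfix_mk] at hu
      intro q hq
      simpa [mul_assoc] using hu q hq
    · rintro ⟨t, ht⟩; simp
    · rintro ⟨u, hu⟩; simp
  rw [Nat.card_congr e1,
    Nat.card_congr (QuotientGroup.preimageMkEquivSubgroupProdSet P (gfix P Q)),
    Nat.card_prod, gfixCard, mul_comm]

lemma card_transporter_conj (g : G) (Q P : Subgroup G) :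
    Nat.card (transporter (Q.map (MulAut.conj g).toMonoidHom) P)
      = Nat.card (transporter Q P) := by
  refine Nat.card_congr ⟨fun t => ⟨(t : G) * g, ?_⟩, fun u => ⟨(u : G) * g⁻¹, ?_⟩, ?_, ?_⟩
  · rcases t with ⟨t, ht⟩
    intro a ha
    have h2 := ht _ ⟨a, ha, rfl⟩
    simp only [MulEquiv.coe_toMonoidHom, MulAut.conj_apply] at h2
    show t * g * a * (t * g)⁻¹ ∈ P
    have : t * g * a * (t * g)⁻¹ = t * (g * a * g⁻¹) * t⁻¹ := by group
    rw [this]; exact h2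
  · rcases u with ⟨u, hu⟩
    rintro a ⟨b, hb, rfl⟩
    have h2 := hu b hb
    show u * g⁻¹ * (MulAut.conj g).toMonoidHom b * (u * g⁻¹)⁻¹ ∈ P
    have : u * g⁻¹ * (MulAut.conj g).toMonoidHom b * (u * g⁻¹)⁻¹ = u * b * u⁻¹ := by
      simp only [MulEquiv.coe_toMonoidHom, MulAut.conj_apply]
      group
    rw [this]; exact h2
  · rintro ⟨t, ht⟩; simp
  · rintro ⟨u, hu⟩; simp

lemma gfixCard_conj [Finite G] (g : G) (Q P : Subgroup G) :
    gfixCard P (Q.map (MulAut.conj g).toMonoidHom) = gfixCard P Q := by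
  have h1 := card_transporter P (Q.map (MulAut.conj g).toMonoidHom)
  have h2 := card_transporter P Q
  have h3 := card_transporter_conj g Q P
  have hP : 0 < Nat.card P := Nat.card_pos
  exact Nat.eq_of_mul_eq_mul_right hP (by omega)

lemma one_mem_transporter {Q P : Subgroup G} (h : Q ≤ P) : 1 ∈ transporter Q P := by
  intro a ha
  simpa using h ha

lemma gfixCard_ne_zero [Finite G] {Q P : Subgroup G} (h : Q ≤ P) : gfixCard P Q ≠ 0 := by
  intro h0
  have h1 := card_transporter P Q
  rw [h0, zero_mul] at h1
  have hne : (transporter Q P).Nonempty := ⟨1, one_mem_transporter h⟩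
  haveI := hne.to_subtype
  have : 0 < Nat.card (transporter Q P) := Nat.card_pos
  omega

lemma exists_conj_le_of_gfixCard_ne_zero [Finite G] {Q P : Subgroup G}
    (h : gfixCard P Q ≠ 0) : ∃ g : G, Q.map (MulAut.conj g).toMonoidHom ≤ P := by
  have h1 := card_transporter P Q
  have hcard : Nat.card (transporter Q P) ≠ 0 := by
    intro h0; rw [h0] at h1
    have hP : 0 < Nat.card P := Nat.card_pos
    rcases Nat.mul_eq_zero.mp h1.symm with h2 | h2 <;> omega
  have hne : (transporter Q P).Nonempty := by
    rw [Set.nonempty_iff_ne_empty]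
    intro h0
    rw [h0] at hcard
    simp at hcard
  obtain ⟨t, ht⟩ := hne
  refine ⟨t, ?_⟩
  rintro x ⟨a, ha, rfl⟩
  exact ht a ha

lemma gconj_of_conj_le_card [Finite G] {Q P : Subgroup G} {g : G}
    (h : Q.map (MulAut.conj g).toMonoidHom ≤ P) (hc : Nat.card P ≤ Nat.card Q) :
    GConj Q P := by
  refine ⟨g, Subgroup.eq_of_le_of_card_ge h ?_⟩
  rwa [card_map_conj']

lemma transporter_self [Finite G] (Q : Subgroup G) :
    transporter Q Q = ((Subgroup.normalizer (Q : Set G)) : Set G) := by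
  ext g
  rw [SetLike.mem_coe]
  constructor
  · intro hg
    have hle : Q.map (MulAut.conj g).toMonoidHom ≤ Q := by
      rintro x ⟨a, ha, rfl⟩; exact hg a ha
    have heq : Q.map (MulAut.conj g).toMonoidHom = Q :=
      Subgroup.eq_of_le_of_card_ge hle (le_of_eq (card_map_conj' g Q).symm)
    rw [Subgroup.mem_normalizer_iff]
    intro h
    constructor
    · intro hh; rw [← heq]; exact ⟨h, hh, rfl⟩
    · intro hh
      rw [← heq] at hh
      rcases hh with ⟨b, hb, hb2⟩
      simp only [MulEquiv.coe_toMonoidHom, MulAut.conj_apply] at hb2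
      have hbh : b = h := by
        have := congrArg (fun x => g⁻¹ * x * g) hb2
        simpa [mul_assoc] using this
      rwa [← hbh]
  · intro hg a ha
    rw [Subgroup.mem_normalizer_iff] at hg
    exact (hg a).mp ha

lemma gfixCard_diag [Finite G] (Q : Subgroup G) :
    gfixCard Q Q * Nat.card Q = Nat.card (Subgroup.normalizer (Q : Set G)) := by
  rw [← card_transporter, transporter_self]
  rfl

end AuxA

section AuxB

variable {p : ℕ} [Fact p.Prime] {G : Type*} [Group G] [Fintype G]

lemma sylow_smul_eq_map (g : G) (T : Sylow p G) :
    ((g • T : Sylow p G) : Subgroup G) = (T : Subgroup G).map (MulAut.conj g).toMonoidHom := by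
  ext x
  rw [mem_map_conj]
  have h1 : ((g • T : Sylow p G) : Subgroup G) = MulAut.conj g • (T : Subgroup G) := rfl
  rw [h1, Subgroup.mem_pointwise_smul_iff_inv_smul_mem]
  simp [MulAut.smul_def, mul_assoc]

lemma exists_fully_normalized (S : Sylow p G) (Q : Subgroup G)
    (hQ : ∃ g : G, Q.map (MulAut.conj g).toMonoidHom ≤ (S : Subgroup G)) :
    ∃ R : Subgroup G, GConj Q R ∧ R ≤ (S : Subgroup G) ∧
      ∃ m : ℕ, ¬ p ∣ m ∧
        Nat.card (Subgroup.normalizer (R : Set G)) = Nat.card ↥((Subgroup.normalizer (R : Set G)) ⊓ (S : Subgroup G)) * m := by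
  obtain ⟨g₀, hg₀⟩ := hQ
  set Q₀ := Q.map (MulAut.conj g₀).toMonoidHom with hQ₀def
  have hGConjQ₀ : GConj Q Q₀ := ⟨g₀, rfl⟩
  set N := (Subgroup.normalizer (Q₀ : Set G)) with hNdef
  have hQ₀N : Q₀ ≤ N := Subgroup.le_normalizer
  have hQ₀p : IsPGroup p ↥Q₀ := S.isPGroup'.to_le hg₀
  have hQ₀'p : IsPGroup p ↥(Q₀.subgroupOf N) := hQ₀p.comap_subtype
  obtain ⟨U, hU⟩ := hQ₀'p.exists_le_sylow
  set U' := (U : Subgroup ↥N).map N.subtype with hU'def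
  have hQ₀U' : Q₀ ≤ U' := by
    have := Subgroup.map_mono (f := N.subtype) hU
    rwa [Subgroup.subgroupOf_map_subtype, inf_eq_left.mpr hQ₀N] at this
  have hU'p : IsPGroup p ↥U' := U.isPGroup'.map N.subtype
  have hU'N : U' ≤ N := Subgroup.map_subtype_le _
  obtain ⟨T, hT⟩ := hU'p.exists_le_sylow
  obtain ⟨g, hg⟩ : ∃ g : G, g • T = S := MulAction.exists_smul_eq G T S
  set R := Q₀.map (MulAut.conj g).toMonoidHom with hRdef
  have hmapT : (T : Subgroup G).map (MulAut.conj g).toMonoidHom = (S : Subgroup G) := by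
    rw [← sylow_smul_eq_map, hg]
  have hRS : R ≤ (S : Subgroup G) := by
    rw [← hmapT]
    exact Subgroup.map_mono (hQ₀U'.trans hT)
  have hnorm : (Subgroup.normalizer (R : Set G)) = N.map (MulAut.conj g).toMonoidHom :=
    (Subgroup.map_equiv_normalizer_eq Q₀ (MulAut.conj g)).symm
  set U'' := U'.map (MulAut.conj g).toMonoidHom with hU''def
  have hU''norm : U'' ≤ (Subgroup.normalizer (R : Set G)) := by
    rw [hnorm]; exact Subgroup.map_mono hU'N
  have hU''S : U'' ≤ (S : Subgroup G) := by
    rw [← hmapT]; exact Subgroup.map_mono hT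
  have hU''int : U'' ≤ (Subgroup.normalizer (R : Set G)) ⊓ (S : Subgroup G) := le_inf hU''norm hU''S
  have hcardU'' : Nat.card ↥U'' = p ^ (Nat.card ↥N).factorization p := by
    rw [hU''def, card_map_conj', hU'def,
      Nat.card_congr (Subgroup.equivMapOfInjective _ _ N.subtype_injective).toEquiv.symm]
    exact U.card_eq_multiplicity
  have hcardNR : Nat.card ↥(Subgroup.normalizer (R : Set G)) = Nat.card ↥N := by
    rw [hnorm, card_map_conj']
  obtain ⟨m, hm⟩ : Nat.card ↥((Subgroup.normalizer (R : Set G)) ⊓ (S : Subgroup G)) ∣ Nat.card ↥(Subgroup.normalizer (R : Set G)) :=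
    Subgroup.card_dvd_of_le inf_le_left
  refine ⟨R, hGConjQ₀.trans' ⟨g, rfl⟩, hRS, m, ?_, hm⟩
  intro hpm
  set a := (Nat.card ↥N).factorization p with hadef
  have hdvd1 : p ^ a ∣ Nat.card ↥((Subgroup.normalizer (R : Set G)) ⊓ (S : Subgroup G)) := by
    rw [← hcardU'']
    exact Subgroup.card_dvd_of_le hU''int
  have hdvd2 : p ^ (a + 1) ∣ Nat.card ↥N := by
    rw [pow_succ, ← hcardNR, hm]
    exact mul_dvd_mul hdvd1 hpm
  rw [hadef] at hdvd2
  exact Nat.pow_succ_factorization_not_dvd Nat.card_pos.ne' Fact.out hdvd2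

end AuxB

/-- universe-polymorphic version of `fixCard` -/
noncomputable def scard {G : Type*} [Group G] (S₀ Q : Subgroup G) (X : Type*)
    (m : MulAction ↥S₀ X) : ℕ :=
  letI := m
  Nat.card ↥{x : X | ∀ s : ↥S₀, (s : G) ∈ Q → s • x = x}

lemma fixCard_eq_scard {H : Type*} [Group H] (S Q : Subgroup H) (X : Type)
    (m : MulAction ↥S X) : fixCard S Q X m = scard S Q X m := rfl

section AuxC

variable {G : Type*} [Group G] [Fintype G]

lemma fix_iff_le_stab (S₀ : Subgroup G) (X : Type*) [m : MulAction ↥S₀ X]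
    (x : X) (Q : Subgroup G) (hQ : Q ≤ S₀) :
    (∀ s : ↥S₀, (s : G) ∈ Q → s • x = x) ↔
      Q ≤ (MulAction.stabilizer ↥S₀ x).map S₀.subtype := by
  constructor
  · intro h g hg
    exact ⟨⟨g, hQ hg⟩, h ⟨g, hQ hg⟩ hg, rfl⟩
  · intro h s hs
    obtain ⟨s', hs', he⟩ := h hs
    have : s' = s := Subtype.ext he
    rw [← this]
    exact hs'

lemma scard_eq_gfixCard (S₀ : Subgroup G) (P Q : Subgroup G) (hQ : Q ≤ S₀) :
    scard S₀ Q (G ⧸ P) inferInstance = gfixCard P Q := by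
  apply congrArg Nat.card
  apply congrArg
  ext x
  constructor
  · intro h g hg
    exact h ⟨g, hQ hg⟩ hg
  · intro h s hs
    exact h ↑s hs

lemma scard_prod (S₀ : Subgroup G) (W : Type*) (mW : MulAction ↥S₀ W)
    (P Q : Subgroup G) (hQ : Q ≤ S₀) :
    scard S₀ Q (W × (G ⧸ P)) (letI := mW; inferInstance)
      = scard S₀ Q W mW * gfixCard P Q := by
  letI := mW
  have hset : {x : W × (G ⧸ P) | ∀ s : ↥S₀, (s : G) ∈ Q → s • x = x}
      = ({w : W | ∀ s : ↥S₀, (s : G) ∈ Q → s • w = w} ×ˢ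
         {z : G ⧸ P | ∀ s : ↥S₀, (s : G) ∈ Q → s • z = z}) := by
    ext ⟨w, z⟩
    simp only [Set.mem_setOf_eq, Set.mem_prod]
    constructor
    · intro h
      exact ⟨fun s hs => congrArg Prod.fst (h s hs), fun s hs => congrArg Prod.snd (h s hs)⟩
    · intro h s hs
      exact Prod.ext (h.1 s hs) (h.2 s hs)
  rw [scard, hset, Nat.card_congr (Equiv.Set.prod _ _), Nat.card_prod]
  rw [← scard_eq_gfixCard S₀ P Q hQ]
  rfl

end AuxC

section AuxD

variable {p : ℕ} [Fact p.Prime] {G : Type*} [Group G] [Fintype G]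

lemma not_dvd_gfixCard_sylow (S : Sylow p G) (Q : Subgroup G) (hQ : Q ≤ S) :
    ¬ p ∣ gfixCard (S : Subgroup G) Q := by
  have hset : gfix (S : Subgroup G) Q
      = MulAction.fixedPoints ↥Q (G ⧸ (S : Subgroup G)) := by
    ext x
    constructor
    · intro h q
      exact h ↑q q.2
    · intro h g hg
      exact h ⟨g, hg⟩
  have hp1 : ¬ p ∣ Nat.card (G ⧸ (S : Subgroup G)) := by
    rw [← Subgroup.index_eq_card]
    exact S.not_dvd_index
  intro hdvd
  apply hp1
  have hmod := (S.isPGroup'.to_le hQ).card_modEq_card_fixedPoints (G ⧸ (S : Subgroup G))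
  rw [gfixCard, hset] at hdvd
  exact (Nat.modEq_zero_iff_dvd).mp (hmod.trans (Nat.modEq_zero_iff_dvd.mpr hdvd))

lemma burnside_congruence (S₀ : Subgroup G) (X : Type*) [Fintype X]
    (mX : MulAction ↥S₀ X) (R : Subgroup G) (hR : R ≤ S₀) :
    ∃ t : ℕ, ∑ n : ↥((Subgroup.normalizer (R : Set G)) ⊓ S₀), scard S₀ (R ⊔ Subgroup.zpowers (n : G)) X mX
        = Nat.card ↥((Subgroup.normalizer (R : Set G)) ⊓ S₀) * t := by
  letI := mX
  set N' := (Subgroup.normalizer (R : Set G)) ⊓ S₀ with hN'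
  let toS : ↥N' → ↥S₀ := fun n => ⟨(n : G), (Subgroup.mem_inf.mp n.2).2⟩
  have toS_mul : ∀ a b : ↥N', toS (a * b) = toS a * toS b := fun a b => Subtype.ext rfl
  have toS_one : toS 1 = 1 := Subtype.ext rfl
  set Y := {x : X | ∀ s : ↥S₀, (s : G) ∈ R → s • x = x} with hY
  have hclose : ∀ (n : ↥N') (x : X), x ∈ Y → toS n • x ∈ Y := by
    intro n x hx s hs
    have hnnorm : (n : G) ∈ (Subgroup.normalizer (R : Set G)) := (Subgroup.mem_inf.mp n.2).1
    have hz : ((toS n)⁻¹ * s * toS n : ↥S₀) • x = x := by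
      apply hx
      show ((n : G)⁻¹ * (s : G) * (n : G)) ∈ R
      refine ((Subgroup.mem_normalizer_iff.mp hnnorm) ((n : G)⁻¹ * (s : G) * (n : G))).mpr ?_
      have : (n : G) * ((n : G)⁻¹ * (s : G) * (n : G)) * (n : G)⁻¹ = (s : G) := by group
      rw [this]
      exact hs
    have h1 : s * toS n = toS n * ((toS n)⁻¹ * s * toS n) := by group
    rw [← mul_smul, h1, mul_smul, hz]
  letI : SMul ↥N' ↥Y := ⟨fun n y => ⟨toS n • (y : X), hclose n y y.2⟩⟩
  have smul_def' : ∀ (n : ↥N') (y : ↥Y), ((n • y : ↥Y) : X) = toS n • (y : X) :=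
    fun n y => rfl
  letI : MulAction ↥N' ↥Y :=
    { one_smul := fun y => Subtype.ext (by rw [smul_def', toS_one, one_smul])
      mul_smul := fun a b y => Subtype.ext (by
        rw [smul_def', smul_def', smul_def', toS_mul, mul_smul]) }
  have hfix : ∀ n : ↥N', Nat.card (MulAction.fixedBy ↥Y n)
      = scard S₀ (R ⊔ Subgroup.zpowers (n : G)) X mX := by
    intro n
    apply Nat.card_congr
    have hsupS : R ⊔ Subgroup.zpowers (n : G) ≤ S₀ :=
      sup_le hR (Subgroup.zpowers_le.mpr (Subgroup.mem_inf.mp n.2).2)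
    refine ⟨fun y => ⟨((y : ↥Y) : X), ?_⟩,
      fun x => ⟨⟨(x : X), fun s hs => x.2 s ((le_sup_left :
          R ≤ R ⊔ Subgroup.zpowers (n : G)) hs)⟩,
        Subtype.ext (x.2 (toS n) ((le_sup_right :
          Subgroup.zpowers (n : G) ≤ R ⊔ Subgroup.zpowers (n : G))
          (Subgroup.mem_zpowers _)))⟩, ?_, ?_⟩
    · rcases y with ⟨y, hy⟩
      have h1 : R ≤ (MulAction.stabilizer ↥S₀ (y : X)).map S₀.subtype :=
        (fix_iff_le_stab S₀ X (y : X) R hR).mp y.2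
      have hyfix : toS n • (y : X) = (y : X) := by
        rw [MulAction.mem_fixedBy] at hy
        exact congrArg Subtype.val hy
      have h2 : (n : G) ∈ (MulAction.stabilizer ↥S₀ (y : X)).map S₀.subtype :=
        ⟨toS n, hyfix, rfl⟩
      exact (fix_iff_le_stab S₀ X (y : X) _ hsupS).mpr
        (sup_le h1 (Subgroup.zpowers_le.mpr h2))
    · intro y
      exact Subtype.ext (Subtype.ext rfl)
    · intro x
      exact Subtype.ext rfl
  refine ⟨Fintype.card (Quotient (MulAction.orbitRel ↥N' ↥Y)), ?_⟩
  have hb := MulAction.sum_card_fixedBy_eq_card_orbits_mul_card_group (G := ↥N') (X := ↥Y)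
  calc ∑ n : ↥N', scard S₀ (R ⊔ Subgroup.zpowers (n : G)) X mX
      = ∑ n : ↥N', Nat.card (MulAction.fixedBy ↥Y n) := by
        exact Finset.sum_congr rfl (fun n _ => (hfix n).symm)
    _ = ∑ n : ↥N', Fintype.card (MulAction.fixedBy ↥Y n) := by
        exact Finset.sum_congr rfl (fun n _ => Nat.card_eq_fintype_card)
    _ = Fintype.card (Quotient (MulAction.orbitRel ↥N' ↥Y)) * Fintype.card ↥N' := hb
    _ = Nat.card ↥N' * Fintype.card (Quotient (MulAction.orbitRel ↥N' ↥Y)) := by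
        rw [Nat.card_eq_fintype_card, mul_comm]

end AuxD

section PInt

variable {p : ℕ} [Fact p.Prime]

lemma not_dvd_one_int : ¬ (p : ℤ) ∣ 1 := by
  intro h
  have := Int.le_of_dvd one_pos h
  have h2 := (Fact.out : p.Prime).one_lt
  omega

lemma isPIntegral_int (n : ℤ) : IsPIntegral p (n : ℚ) :=
  ⟨n, 1, not_dvd_one_int, by push_cast; ring⟩

lemma isPIntegral_nat (n : ℕ) : IsPIntegral p (n : ℚ) := by
  have := isPIntegral_int (p := p) (n : ℤ)
  push_cast at this
  exact this

lemma IsPIntegral.add {x y : ℚ} (hx : IsPIntegral p x) (hy : IsPIntegral p y) :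
    IsPIntegral p (x + y) := by
  obtain ⟨a1, b1, hb1, h1⟩ := hx
  obtain ⟨a2, b2, hb2, h2⟩ := hy
  refine ⟨a1 * b2 + a2 * b1, b1 * b2, ?_, ?_⟩
  · intro h
    rcases ((Nat.prime_iff_prime_int.mp (Fact.out : p.Prime)).2.2 _ _ h) with h' | h' <;> tauto
  · push_cast
    linear_combination (b2 : ℚ) * h1 + (b1 : ℚ) * h2

lemma IsPIntegral.mul {x y : ℚ} (hx : IsPIntegral p x) (hy : IsPIntegral p y) :
    IsPIntegral p (x * y) := by
  obtain ⟨a1, b1, hb1, h1⟩ := hx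
  obtain ⟨a2, b2, hb2, h2⟩ := hy
  refine ⟨a1 * a2, b1 * b2, ?_, ?_⟩
  · intro h
    rcases ((Nat.prime_iff_prime_int.mp (Fact.out : p.Prime)).2.2 _ _ h) with h' | h' <;> tauto
  · push_cast
    linear_combination (y * (b2 : ℚ)) * h1 + (a1 : ℚ) * h2

lemma IsPIntegral.neg {x : ℚ} (hx : IsPIntegral p x) : IsPIntegral p (-x) := by
  have := hx.mul (isPIntegral_int (p := p) (-1))
  push_cast at this
  simpa [mul_comm] using this

lemma IsPIntegral.sub {x y : ℚ} (hx : IsPIntegral p x) (hy : IsPIntegral p y) :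
    IsPIntegral p (x - y) := by
  have := hx.add hy.neg
  simpa [sub_eq_add_neg] using this

lemma isPIntegral_zero : IsPIntegral p 0 := by
  simpa using isPIntegral_nat (p := p) 0

lemma isPIntegral_sum {ι : Type*} (s : Finset ι) (f : ι → ℚ)
    (h : ∀ i ∈ s, IsPIntegral p (f i)) : IsPIntegral p (∑ i ∈ s, f i) := by
  classical
  induction s using Finset.cons_induction with
  | empty => simpa using isPIntegral_zero
  | cons a s ha ih =>
    rw [Finset.sum_cons]
    exact (h a (Finset.mem_cons_self a s)).add
      (ih fun i hi => h i (Finset.mem_cons_of_mem hi))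

end PInt

section MainInduction

variable {p : ℕ} [Fact p.Prime] {G : Type*} [Group G] [Fintype G]

lemma main_induction (S : Sylow p G)
    (ξ : Subgroup G → ℕ)
    (rep : Subgroup G → Subgroup G)
    (reps : Finset (Subgroup G))
    (hrep_mem : ∀ Q : Subgroup G, Q ≤ (S : Subgroup G) → rep Q ∈ reps)
    (hrep_conjQ : ∀ Q : Subgroup G, Q ≤ (S : Subgroup G) → GConj Q (rep Q))
    (hrep_eqcls : ∀ Q Q' : Subgroup G, GConj Q Q' → rep Q = rep Q')
    (hreps_le : ∀ R ∈ reps, R ≤ (S : Subgroup G))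
    (hreps_fix : ∀ R ∈ reps, rep R = R)
    (hfn : ∀ R ∈ reps, ∃ m : ℕ, ¬ p ∣ m ∧
      Nat.card (Subgroup.normalizer (R : Set G)) = Nat.card ↥((Subgroup.normalizer (R : Set G)) ⊓ (S : Subgroup G)) * m)
    (hξconj : ∀ Q Q' : Subgroup G, Q ≤ (S : Subgroup G) → Q' ≤ (S : Subgroup G) →
      GConj Q Q' → ξ Q = ξ Q')
    (hξcong : ∀ R : Subgroup G, R ≤ (S : Subgroup G) → ∃ t : ℕ,
      ∑ n : ↥((Subgroup.normalizer (R : Set G)) ⊓ (S : Subgroup G)), ξ (R ⊔ Subgroup.zpowers (n : G))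
        = Nat.card ↥((Subgroup.normalizer (R : Set G)) ⊓ (S : Subgroup G)) * t)
    (hgcong : ∀ P ∈ reps, ∀ R : Subgroup G, R ≤ (S : Subgroup G) → ∃ t : ℕ,
      ∑ n : ↥((Subgroup.normalizer (R : Set G)) ⊓ (S : Subgroup G)), gfixCard P (R ⊔ Subgroup.zpowers (n : G))
        = Nat.card ↥((Subgroup.normalizer (R : Set G)) ⊓ (S : Subgroup G)) * t)
    (n : ℕ) :
    ∀ T : Finset (Subgroup G), T ⊆ reps →
      (∀ R ∈ reps, ∀ Q ∈ T, Nat.card Q < Nat.card R → R ∈ T) → T.card = n →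
      ∃ c : Subgroup G → ℚ, (∀ R, IsPIntegral p (c R)) ∧ (∀ R ∉ T, c R = 0) ∧
        ∀ Q : Subgroup G, Q ≤ (S : Subgroup G) → rep Q ∈ T →
          (ξ Q : ℚ) = ∑ R ∈ reps, c R * gfixCard R Q := by
  induction n with
  | zero =>
    intro T _ _ hcard
    rw [Finset.card_eq_zero] at hcard
    subst hcard
    exact ⟨fun _ => 0, fun _ => isPIntegral_zero, fun _ _ => rfl,
      fun Q _ h => absurd h (Finset.notMem_empty _)⟩
  | succ n ih =>
    intro T hTsub hTclosed hTcard
    have hne : T.Nonempty := Finset.card_pos.mp (by omega)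
    obtain ⟨R₀, hR₀T, hmin⟩ := T.exists_min_image (fun R => Nat.card ↥R) hne
    set T' := T.erase R₀ with hT'def
    have hT'sub : T' ⊆ reps := (Finset.erase_subset _ _).trans hTsub
    have hT'closed : ∀ R ∈ reps, ∀ Q ∈ T', Nat.card Q < Nat.card R → R ∈ T' := by
      intro R hR Q hQ hlt
      have hQT : Q ∈ T := Finset.mem_of_mem_erase hQ
      refine Finset.mem_erase.mpr ⟨?_, hTclosed R hR Q hQT hlt⟩
      rintro rfl
      exact absurd (hmin Q hQT) (by omega)
    have hT'card : T'.card = n := by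
      rw [hT'def, Finset.card_erase_of_mem hR₀T]
      omega
    obtain ⟨c, hcint, hcsupp, hceq⟩ := ih T' hT'sub hT'closed hT'card
    have hR₀reps : R₀ ∈ reps := hTsub hR₀T
    have hR₀S : R₀ ≤ (S : Subgroup G) := hreps_le R₀ hR₀reps
    set D := gfixCard R₀ R₀ with hDdef
    have hD : D ≠ 0 := gfixCard_ne_zero le_rfl
    set num : ℚ := (ξ R₀ : ℚ) - ∑ R ∈ reps, c R * gfixCard R R₀ with hnumdef
    set c₀ : ℚ := num / D with hc₀def
    set c' : Subgroup G → ℚ := fun R => if R = R₀ then c₀ else c R with hc'def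
    -- the remainder vanishes above R₀
    have hvanish : ∀ Q : Subgroup G, Q ≤ (S : Subgroup G) → Nat.card ↥R₀ < Nat.card ↥Q →
        (ξ Q : ℚ) = ∑ R ∈ reps, c R * gfixCard R Q := by
      intro Q hQ hlt
      apply hceq Q hQ
      have h1 : rep Q ∈ reps := hrep_mem Q hQ
      have hcard : Nat.card ↥(rep Q) = Nat.card ↥Q := ((hrep_conjQ Q hQ).card_eq).symm
      have h2 : rep Q ∈ T := hTclosed _ h1 R₀ hR₀T (by omega)
      refine Finset.mem_erase.mpr ⟨?_, h2⟩
      rintro heq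
      rw [heq] at hcard
      omega
    -- the R₀-column vanishes at subgroups represented in T'
    have hzero : ∀ Q : Subgroup G, Q ≤ (S : Subgroup G) → rep Q ∈ T' →
        gfixCard R₀ Q = 0 := by
      intro Q hQ hQT'
      by_contra h0
      obtain ⟨g, hg⟩ := exists_conj_le_of_gfixCard_ne_zero h0
      have hle : Nat.card ↥Q ≤ Nat.card ↥R₀ := by
        have h1 : Nat.card ↥(Q.map (MulAut.conj g).toMonoidHom) ∣ Nat.card ↥R₀ :=
          Subgroup.card_dvd_of_le hg
      
        rw [card_map_conj'] at h1
        exact Nat.le_of_dvd Nat.card_pos h1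
      have hge : Nat.card ↥R₀ ≤ Nat.card ↥Q := by
        have h1 := hmin (rep Q) (Finset.mem_of_mem_erase hQT')
        have h2 : Nat.card ↥(rep Q) = Nat.card ↥Q := ((hrep_conjQ Q hQ).card_eq).symm
        omega
      have hGC : GConj Q R₀ := gconj_of_conj_le_card hg hge
      have heq : rep Q = R₀ := by
        rw [hrep_eqcls Q R₀ hGC]
        exact hreps_fix R₀ hR₀reps
      rw [heq] at hQT'
      exact absurd hQT' (Finset.notMem_erase R₀ T)
    -- p-integrality of c₀
    have hc₀int : IsPIntegral p c₀ := by
      obtain ⟨m, hpm, hmcard⟩ := hfn R₀ hR₀reps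
      set N' := (Subgroup.normalizer (R₀ : Set G)) ⊓ (S : Subgroup G) with hN'def
      obtain ⟨tξ, htξ⟩ := hξcong R₀ hR₀S
      have htg : ∀ R ∈ reps, ∃ t : ℕ,
          ∑ n : ↥N', gfixCard R (R₀ ⊔ Subgroup.zpowers (n : G))
            = Nat.card ↥N' * t := fun R hR => hgcong R hR R₀ hR₀S
      set tg : Subgroup G → ℕ := fun R => if hR : R ∈ reps then (htg R hR).choose else 0
        with htgdef
      have htgspec : ∀ R ∈ reps,
          ∑ n : ↥N', gfixCard R (R₀ ⊔ Subgroup.zpowers (n : G))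
            = Nat.card ↥N' * tg R := by
        intro R hR
        rw [htgdef]
        simp only [hR, dif_pos]
        exact (htg R hR).choose_spec
      set ρ : ℚ := (tξ : ℚ) - ∑ R ∈ reps, c R * tg R with hρdef
      have hρint : IsPIntegral p ρ := by
        refine (isPIntegral_nat tξ).sub (isPIntegral_sum _ _ ?_)
        intro R hR
        exact (hcint R).mul (isPIntegral_nat (tg R))
      -- key sum identity
      have hQnS : ∀ nn : ↥N', R₀ ⊔ Subgroup.zpowers (nn : G) ≤ (S : Subgroup G) :=
        fun nn => sup_le hR₀S (Subgroup.zpowers_le.mpr (Subgroup.mem_inf.mp nn.2).2)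
      have hF : ∀ nn : ↥N',
          ((ξ (R₀ ⊔ Subgroup.zpowers (nn : G)) : ℚ)
            - ∑ R ∈ reps, c R * gfixCard R (R₀ ⊔ Subgroup.zpowers (nn : G)))
          = if (nn : G) ∈ R₀ then num else 0 := by
        intro nn
        by_cases hn : (nn : G) ∈ R₀
        · have hQn : R₀ ⊔ Subgroup.zpowers (nn : G) = R₀ :=
            sup_eq_left.mpr (Subgroup.zpowers_le.mpr hn)
          rw [hQn, if_pos hn, hnumdef]
        · have hlt : R₀ < R₀ ⊔ Subgroup.zpowers (nn : G) := by
            refine lt_of_le_of_ne le_sup_left ?_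
            intro heq
            exact hn (heq ▸ (le_sup_right : Subgroup.zpowers (nn : G) ≤ _)
              (Subgroup.mem_zpowers _))
          have hcardlt := card_lt_of_lt' hlt
          rw [if_neg hn, sub_eq_zero]
          exact hvanish _ (hQnS nn) hcardlt
      have hS1 : ∑ nn : ↥N',
          ((ξ (R₀ ⊔ Subgroup.zpowers (nn : G)) : ℚ)
            - ∑ R ∈ reps, c R * gfixCard R (R₀ ⊔ Subgroup.zpowers (nn : G)))
          = (Nat.card ↥N' : ℚ) * ρ := by
        rw [Finset.sum_sub_distrib]
        have e1 : ∑ nn : ↥N', (ξ (R₀ ⊔ Subgroup.zpowers (nn : G)) : ℚ)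
            = (Nat.card ↥N' : ℚ) * tξ := by
          rw [← Nat.cast_sum]
          rw [htξ]
          push_cast
          ring
        have e2 : ∑ nn : ↥N', ∑ R ∈ reps,
            c R * (gfixCard R (R₀ ⊔ Subgroup.zpowers (nn : G)) : ℚ)
            = ∑ R ∈ reps, c R * ((Nat.card ↥N' : ℚ) * tg R) := by
          rw [Finset.sum_comm]
          refine Finset.sum_congr rfl ?_
          intro R hR
          rw [← Finset.mul_sum, ← Nat.cast_sum, htgspec R hR]
          push_cast
          ring
        rw [e1, e2, hρdef, mul_sub, Finset.mul_sum]
        congr 1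
        refine Finset.sum_congr rfl ?_
        intro R hR
        ring
      have hS2 : ∑ nn : ↥N',
          ((ξ (R₀ ⊔ Subgroup.zpowers (nn : G)) : ℚ)
            - ∑ R ∈ reps, c R * gfixCard R (R₀ ⊔ Subgroup.zpowers (nn : G)))
          = (Nat.card ↥R₀ : ℚ) * num := by
        have hcardfilter : (Finset.univ.filter (fun nn : ↥N' => (nn : G) ∈ R₀)).card
            = Nat.card ↥R₀ := by
          rw [← Fintype.card_subtype, ← Nat.card_eq_fintype_card]
          exact Nat.card_congr ⟨fun x => ⟨↑↑x, x.2⟩,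
            fun r => ⟨⟨↑r, Subgroup.mem_inf.mpr
              ⟨Subgroup.le_normalizer r.2, hR₀S r.2⟩⟩, r.2⟩,
            fun x => Subtype.ext (Subtype.ext rfl), fun r => Subtype.ext rfl⟩
        rw [Finset.sum_congr rfl (fun nn _ => hF nn), ← Finset.sum_filter,
          Finset.sum_const, nsmul_eq_mul, hcardfilter]
      have hkey : (Nat.card ↥R₀ : ℚ) * num = (Nat.card ↥N' : ℚ) * ρ := by
        rw [← hS1, ← hS2]
      have hdiag : (D : ℚ) * (Nat.card ↥R₀ : ℚ) = (Nat.card ↥N' : ℚ) * m := by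
        have := gfixCard_diag R₀
        rw [← hDdef] at this
        have h2 : (D * Nat.card ↥R₀ : ℕ) = (Nat.card ↥N' * m : ℕ) := by
          rw [this, hmcard, hN'def]
        exact_mod_cast congrArg (Nat.cast : ℕ → ℚ) h2
      have hcm : c₀ * m = ρ := by
        have hR₀pos : (Nat.card ↥R₀ : ℚ) ≠ 0 := by
          exact_mod_cast Nat.card_pos.ne'
        have hDQ : (D : ℚ) ≠ 0 := Nat.cast_ne_zero.mpr hD
        have h4 : (Nat.card ↥R₀ : ℚ) * (num * m) = (Nat.card ↥R₀ : ℚ) * (ρ * (D : ℚ)) := by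
          linear_combination (m : ℚ) * hkey - ρ * hdiag
        have h5 : num * m = ρ * (D : ℚ) := mul_left_cancel₀ hR₀pos h4
        rw [hc₀def, div_mul_eq_mul_div, h5, mul_div_assoc, div_self hDQ, mul_one]
      obtain ⟨aρ, bρ, hbρ, hρeq⟩ := hρint
      refine ⟨aρ, m * bρ, ?_, ?_⟩
      · intro h
        rcases ((Nat.prime_iff_prime_int.mp (Fact.out : p.Prime)).2.2 _ _ h) with h' | h'
        · exact hpm (Int.natCast_dvd_natCast.mp h')
        · exact hbρ h'
      · push_cast
        rw [← mul_assoc, hcm]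
        exact hρeq
    -- sum splitting identity
    have hsum' : ∀ Q : Subgroup G,
        ∑ R ∈ reps, c' R * gfixCard R Q
          = (∑ R ∈ reps, c R * gfixCard R Q) + c₀ * gfixCard R₀ Q := by
      intro Q
      have h1 : ∑ R ∈ reps.erase R₀, c' R * (gfixCard R Q : ℚ)
          = ∑ R ∈ reps.erase R₀, c R * (gfixCard R Q : ℚ) := by
        refine Finset.sum_congr rfl ?_
        intro R hR
        rw [hc'def]
        simp only [(Finset.mem_erase.mp hR).1, if_neg, ite_false]
      have h2 : ∑ R ∈ reps.erase R₀, c' R * (gfixCard R Q : ℚ)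
            + c' R₀ * (gfixCard R₀ Q : ℚ)
          = ∑ R ∈ reps, c' R * (gfixCard R Q : ℚ) :=
        Finset.sum_erase_add reps _ hR₀reps
      have h3 : ∑ R ∈ reps.erase R₀, c R * (gfixCard R Q : ℚ)
            + c R₀ * (gfixCard R₀ Q : ℚ)
          = ∑ R ∈ reps, c R * (gfixCard R Q : ℚ) :=
        Finset.sum_erase_add reps _ hR₀reps
      have hcR₀ : c R₀ = 0 := hcsupp R₀ (Finset.notMem_erase R₀ T)
      have hc'R₀ : c' R₀ = c₀ := by rw [hc'def]; simp
      rw [← h2, ← h3, h1, hc'R₀, hcR₀]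
      ring
    refine ⟨c', ?_, ?_, ?_⟩
    · intro R
      rw [hc'def]
      by_cases h : R = R₀
      · simpa [h] using hc₀int
      · simpa [h] using hcint R
    · intro R hR
      rw [hc'def]
      have h1 : R ≠ R₀ := fun h => hR (h ▸ hR₀T)
      have h2 : R ∉ T' := fun h => hR (Finset.mem_of_mem_erase h)
      simp only [h1, if_neg, ite_false]
      exact hcsupp R h2
    · intro Q hQ hQT
      rw [hsum' Q]
      by_cases hcase : rep Q ∈ T'
      · rw [← hceq Q hQ hcase, hzero Q hQ hcase]
        push_cast
        ring
      · have heq : rep Q = R₀ := by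
          by_contra hne'
          exact hcase (Finset.mem_erase.mpr ⟨hne', hQT⟩)
        obtain ⟨g, hg⟩ := hrep_conjQ Q hQ
        rw [heq] at hg
        have hξQ : ξ Q = ξ R₀ := hξconj Q R₀ hQ hR₀S (heq ▸ hrep_conjQ Q hQ)
        have hgfix : ∀ R : Subgroup G, gfixCard R Q = gfixCard R R₀ := by
          intro R
          rw [← hg, gfixCard_conj]
        have hsum2 : ∑ R ∈ reps, c R * (gfixCard R Q : ℚ)
            = ∑ R ∈ reps, c R * (gfixCard R R₀ : ℚ) := by
          refine Finset.sum_congr rfl fun R _ => by rw [hgfix R]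
        have hDQ : (D : ℚ) ≠ 0 := Nat.cast_ne_zero.mpr hD
        have hDmul : c₀ * (gfixCard R₀ R₀ : ℚ) = num := by
          rw [hc₀def, ← hDdef]
          exact div_mul_cancel₀ num hDQ
        rw [hξQ, hsum2, hgfix R₀, hDmul, hnumdef]
        ring
  
end MainInduction

theorem stmt13 (p : ℕ) [Fact p.Prime] (G : Type*) [Group G] [Fintype G]
    (S : Sylow p G) (W : Type) (fW : Fintype W)
    (mW : MulAction ↥(S : Subgroup G) W)
    (hstable : ∀ Q Q' : Subgroup G, Q ≤ ↑S → Q' ≤ ↑S → GConj Q Q' →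
      fixCard ↑S Q W mW = fixCard ↑S Q' W mW) :
    ∃ (k : ℕ) (P : Fin k → Subgroup G) (c : Fin k → ℚ),
      (∀ i, P i ≤ ↑S) ∧
      (∀ i j, i ≠ j → ¬ GConj (P i) (P j)) ∧
      (∀ i, IsPIntegral p (c i)) ∧
      ∀ Q : Subgroup G, Q ≤ ↑S →
        (fixCard ↑S Q W mW : ℚ) = ∑ i, c i * fpMark ↑S (P i) Q := by
  classical
  haveI : Fintype (Subgroup G) :=
    Fintype.ofInjective (fun H : Subgroup G => (H : Set G)) SetLike.coe_injective
  letI sd : Setoid (Subgroup G) :=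
    ⟨GConj, ⟨GConj.refl', fun h => h.symm', fun h1 h2 => h1.trans' h2⟩⟩
  -- choice of fully normalized representatives, constant on conjugacy classes
  have hex : ∀ q : Quotient sd, ∃ R : Subgroup G,
      (∃ Q0 : Subgroup G, Q0 ≤ (S : Subgroup G) ∧ ⟦Q0⟧ = q) →
      (R ≤ (S : Subgroup G) ∧ ⟦R⟧ = q ∧ ∃ m : ℕ, ¬ p ∣ m ∧
        Nat.card (Subgroup.normalizer (R : Set G)) = Nat.card ↥((Subgroup.normalizer (R : Set G)) ⊓ (S : Subgroup G)) * m) := by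
    intro q
    by_cases h : ∃ Q0 : Subgroup G, Q0 ≤ (S : Subgroup G) ∧ ⟦Q0⟧ = q
    · obtain ⟨Q0, hQ0S, hQ0q⟩ := h
      have hex0 : ∃ g : G, Q0.map (MulAut.conj g).toMonoidHom ≤ (S : Subgroup G) := by
        obtain ⟨g1, hg1⟩ := GConj.refl' Q0
        refine ⟨g1, ?_⟩
        rw [hg1]
        exact hQ0S
      obtain ⟨R, hconj, hRS, hm⟩ := exists_fully_normalized S Q0 hex0
      refine ⟨R, fun _ => ⟨hRS, ?_, hm⟩⟩
      rw [← hQ0q]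
      exact Quotient.sound (hconj.symm' : GConj R Q0)
    · exact ⟨⊥, fun hh => absurd hh h⟩
  choose repq hrepq using hex
  set rep : Subgroup G → Subgroup G := fun Q => repq ⟦Q⟧ with hrepdef
  have hQcls : ∀ Q : Subgroup G, Q ≤ (S : Subgroup G) →
      (∃ Q0 : Subgroup G, Q0 ≤ (S : Subgroup G) ∧ ⟦Q0⟧ = (⟦Q⟧ : Quotient sd)) :=
    fun Q hQ => ⟨Q, hQ, rfl⟩
  have hrep_le : ∀ Q : Subgroup G, Q ≤ (S : Subgroup G) → rep Q ≤ (S : Subgroup G) :=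
    fun Q hQ => (hrepq ⟦Q⟧ (hQcls Q hQ)).1
  have hrep_cls : ∀ Q : Subgroup G, Q ≤ (S : Subgroup G) → (⟦rep Q⟧ : Quotient sd) = ⟦Q⟧ :=
    fun Q hQ => (hrepq ⟦Q⟧ (hQcls Q hQ)).2.1
  have hrep_fn : ∀ Q : Subgroup G, Q ≤ (S : Subgroup G) → ∃ m : ℕ, ¬ p ∣ m ∧
      Nat.card (Subgroup.normalizer ((rep Q : Subgroup G) : Set G))
        = Nat.card ↥((Subgroup.normalizer ((rep Q : Subgroup G) : Set G)) ⊓ (S : Subgroup G)) * m :=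
    fun Q hQ => (hrepq ⟦Q⟧ (hQcls Q hQ)).2.2
  have hrep_conjQ : ∀ Q : Subgroup G, Q ≤ (S : Subgroup G) → GConj Q (rep Q) :=
    fun Q hQ => (Quotient.exact (hrep_cls Q hQ) : GConj (rep Q) Q).symm'
  have hrep_eqcls : ∀ Q Q' : Subgroup G, GConj Q Q' → rep Q = rep Q' := by
    intro Q Q' h
    have : (⟦Q⟧ : Quotient sd) = ⟦Q'⟧ := Quotient.sound h
    rw [hrepdef]
    simp only [this]
  set reps : Finset (Subgroup G) :=
    Finset.image rep (Finset.univ.filter (fun Q => Q ≤ (S : Subgroup G))) with hrepsdef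
  have hmem_reps : ∀ R : Subgroup G, R ∈ reps ↔
      ∃ Q : Subgroup G, Q ≤ (S : Subgroup G) ∧ rep Q = R := by
    intro R
    rw [hrepsdef, Finset.mem_image]
    constructor
    · rintro ⟨Q, hQ, rfl⟩
      exact ⟨Q, (Finset.mem_filter.mp hQ).2, rfl⟩
    · rintro ⟨Q, hQ, rfl⟩
      exact ⟨Q, Finset.mem_filter.mpr ⟨Finset.mem_univ _, hQ⟩, rfl⟩
  have hrep_mem : ∀ Q : Subgroup G, Q ≤ (S : Subgroup G) → rep Q ∈ reps :=
    fun Q hQ => (hmem_reps _).mpr ⟨Q, hQ, rfl⟩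
  have hreps_le : ∀ R ∈ reps, R ≤ (S : Subgroup G) := by
    intro R hR
    obtain ⟨Q, hQ, rfl⟩ := (hmem_reps R).mp hR
    exact hrep_le Q hQ
  have hreps_fix : ∀ R ∈ reps, rep R = R := by
    intro R hR
    obtain ⟨Q, hQ, rfl⟩ := (hmem_reps R).mp hR
    exact hrep_eqcls _ _ ((hrep_conjQ Q hQ).symm')
  have hfn : ∀ R ∈ reps, ∃ m : ℕ, ¬ p ∣ m ∧
      Nat.card (Subgroup.normalizer (R : Set G)) = Nat.card ↥((Subgroup.normalizer (R : Set G)) ⊓ (S : Subgroup G)) * m := by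
    intro R hR
    obtain ⟨Q, hQ, rfl⟩ := (hmem_reps R).mp hR
    exact hrep_fn Q hQ
  -- the stable set `V = W × G/S` and its fixed-point counts
  set ξ : Subgroup G → ℕ := fun Q =>
    scard (S : Subgroup G) Q (W × (G ⧸ (S : Subgroup G))) (letI := mW; inferInstance)
    with hξdef
  have hξ_eq : ∀ Q : Subgroup G, Q ≤ (S : Subgroup G) →
      ξ Q = fixCard (S : Subgroup G) Q W mW * gfixCard (S : Subgroup G) Q := by
    intro Q hQ
    exact scard_prod (S : Subgroup G) W mW (S : Subgroup G) Q hQ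
  have hgfix_conj' : ∀ (P' Q Q' : Subgroup G), GConj Q Q' →
      gfixCard P' Q = gfixCard P' Q' := by
    intro P' Q Q' h
    obtain ⟨g, hg⟩ := h
    rw [← hg, gfixCard_conj]
  have hξconj : ∀ Q Q' : Subgroup G, Q ≤ (S : Subgroup G) → Q' ≤ (S : Subgroup G) →
      GConj Q Q' → ξ Q = ξ Q' := by
    intro Q Q' hQ hQ' h
    rw [hξ_eq Q hQ, hξ_eq Q' hQ', hstable Q Q' hQ hQ' h, hgfix_conj' _ _ _ h]
  have hξcong : ∀ R : Subgroup G, R ≤ (S : Subgroup G) → ∃ t : ℕ,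
      ∑ n : ↥((Subgroup.normalizer (R : Set G)) ⊓ (S : Subgroup G)), ξ (R ⊔ Subgroup.zpowers (n : G))
        = Nat.card ↥((Subgroup.normalizer (R : Set G)) ⊓ (S : Subgroup G)) * t := by
    intro R hR
    exact burnside_congruence (S : Subgroup G) (W × (G ⧸ (S : Subgroup G)))
      (letI := mW; inferInstance) R hR
  have hgcong : ∀ P' ∈ reps, ∀ R : Subgroup G, R ≤ (S : Subgroup G) → ∃ t : ℕ,
      ∑ n : ↥((Subgroup.normalizer (R : Set G)) ⊓ (S : Subgroup G)), gfixCard P' (R ⊔ Subgroup.zpowers (n : G))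
        = Nat.card ↥((Subgroup.normalizer (R : Set G)) ⊓ (S : Subgroup G)) * t := by
    intro P' _ R hR
    obtain ⟨t, ht⟩ := burnside_congruence (S : Subgroup G) (G ⧸ P') inferInstance R hR
    refine ⟨t, ?_⟩
    rw [← ht]
    refine Finset.sum_congr rfl ?_
    intro nn _
    exact (scard_eq_gfixCard (S : Subgroup G) P' _
      (sup_le hR (Subgroup.zpowers_le.mpr (Subgroup.mem_inf.mp nn.2).2))).symm
  -- run the induction with T = reps
  obtain ⟨c, hcint, -, hceq⟩ := main_induction S ξ rep reps hrep_mem hrep_conjQ hrep_eqcls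
    hreps_le hreps_fix hfn hξconj hξcong hgcong reps.card reps le_rfl
    (fun R hR _ _ _ => hR) rfl
  -- package into a `Fin k`-indexed family
  set k := reps.card with hkdef
  set e := reps.equivFin with hedef
  set P : Fin k → Subgroup G := fun i => ((e.symm i : ↥reps) : Subgroup G) with hPdef
  have hPmem : ∀ i, P i ∈ reps := fun i => (e.symm i).2
  refine ⟨k, P, fun i => c (P i), fun i => hreps_le _ (hPmem i), ?_, fun i => hcint _, ?_⟩
  · intro i j hij hconj
    apply hij
    have h1 : rep (P i) = rep (P j) := hrep_eqcls _ _ hconj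
    rw [hreps_fix _ (hPmem i), hreps_fix _ (hPmem j)] at h1
    have h2 : (e.symm i : ↥reps) = e.symm j := Subtype.ext h1
    exact e.symm.injective h2
  · intro Q hQ
    have hmain := hceq Q hQ (hrep_mem Q hQ)
    have hu : gfixCard (S : Subgroup G) Q ≠ 0 := gfixCard_ne_zero hQ
    have huQ : ((gfixCard (S : Subgroup G) Q : ℕ) : ℚ) ≠ 0 := Nat.cast_ne_zero.mpr hu
    have hmark : ∀ P' : Subgroup G, fpMark (S : Subgroup G) P' Q
        = (gfixCard P' Q : ℚ) / (gfixCard (S : Subgroup G) Q : ℚ) := by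
      intro P'
      have hP' : ((Nat.card ↥P' : ℕ) : ℚ) ≠ 0 := Nat.cast_ne_zero.mpr Nat.card_pos.ne'
      have hS' : ((Nat.card ↥(S : Subgroup G) : ℕ) : ℚ) ≠ 0 :=
        Nat.cast_ne_zero.mpr Nat.card_pos.ne'
      rw [fpMark, card_transporter, card_transporter]
      push_cast
      field_simp
    calc (fixCard (S : Subgroup G) Q W mW : ℚ)
        = (ξ Q : ℚ) / (gfixCard (S : Subgroup G) Q : ℚ) := by
          rw [hξ_eq Q hQ]
          push_cast
          rw [mul_div_assoc, div_self huQ, mul_one]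
      _ = (∑ R ∈ reps, c R * (gfixCard R Q : ℚ)) / (gfixCard (S : Subgroup G) Q : ℚ) := by
          rw [hmain]
      _ = ∑ x : ↥reps, c ↑x * (gfixCard (↑x : Subgroup G) Q : ℚ)
            / (gfixCard (S : Subgroup G) Q : ℚ) := by
          rw [← Finset.sum_div, Finset.sum_coe_sort reps
            (fun R => c R * (gfixCard R Q : ℚ))]
      _ = ∑ i : Fin k, c (P i) * (gfixCard (P i) Q : ℚ)
            / (gfixCard (S : Subgroup G) Q : ℚ) := by
          rw [← Equiv.sum_comp e.symm (fun x : ↥reps => c ↑x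
            * (gfixCard (↑x : Subgroup G) Q : ℚ) / (gfixCard (S : Subgroup G) Q : ℚ))]
      _ = ∑ i : Fin k, c (P i) * fpMark (S : Subgroup G) (P i) Q := by
          refine Finset.sum_congr rfl ?_
          intro i _
          rw [hmark (P i), mul_div_assoc]
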